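/- For λ ∈ (0,3], the polynomial f_λ(x,y) = x³ + y³ + (3-λ)xy + λ·xy·(x³ + 3xy + y³) has all nonnegative coefficients, satisfies f_λ(x,1-x) = 1 for all x, and has degree 5; moreover f_λ(1,1) = 5 + 4λ. -/
import Mathlib

open MvPolynomial Finsupp in
private lemma monomial_form (l : ℝ) :
    (X 0 ^ 3 + X 1 ^ 3 + C (3 - l) * (X 0 * X 1)
      + C l * (X 0 * X 1) * (X 0 ^ 3 + C 3 * (X 0 * X 1) + X 1 ^ 3) : MvPolynomial (Fin 2) ℝ)
    = monomial (single 0 3) 1 + monomial (single 1 3) 1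
      + monomial (single 0 1 + single 1 1) (3 - l)
      + monomial (single 0 4 + single 1 1) l
      + monomial (single 0 2 + single 1 2) (3 * l)
      + monomial (single 0 1 + single 1 4) l := by
  have h1 : (single 0 3 : Fin 2 →₀ ℕ) = 3 • single 0 1 := by ext i; fin_cases i <;> simp
  have h2 : (single 1 3 : Fin 2 →₀ ℕ) = 3 • single 1 1 := by ext i; fin_cases i <;> simp
  have h3 : (single 0 4 + single 1 1 : Fin 2 →₀ ℕ)
      = (single 0 1 + single 1 1) + 3 • single 0 1 := by ext i; fin_cases i <;> simp
  have h4 : (single 0 2 + single 1 2 : Fin 2 →₀ ℕ)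
      = (single 0 1 + single 1 1) + (single 0 1 + single 1 1) := by ext i; fin_cases i <;> simp
  have h5 : (single 0 1 + single 1 4 : Fin 2 →₀ ℕ)
      = (single 0 1 + single 1 1) + 3 • single 1 1 := by ext i; fin_cases i <;> simp
  rw [h1, h2, h3, h4, h5]
  simp only [X_pow_eq_monomial, X, monomial_mul, C_mul_monomial, monomial_pow, mul_add, add_mul,
    one_mul, mul_one, one_pow]
  ring_nf

open MvPolynomial in
/-- For `λ ∈ (0,3]`, the polynomial
`f_λ = x³ + y³ + (3-λ)xy + λ·xy·(x³ + 3xy + y³)` has nonnegative coefficients,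
equals `1` on the line `x + y = 1`, has degree `5`, and `f_λ(1,1) = 5 + 4λ`. -/
theorem family_of_degree_five (l : ℝ) (hl0 : 0 < l) (hl3 : l ≤ 3) :
    ∀ f : MvPolynomial (Fin 2) ℝ,
      f = X 0 ^ 3 + X 1 ^ 3 + C (3 - l) * (X 0 * X 1)
            + C l * (X 0 * X 1) * (X 0 ^ 3 + C 3 * (X 0 * X 1) + X 1 ^ 3) →
      (∀ m, 0 ≤ f.coeff m) ∧
      (∀ x : ℝ, MvPolynomial.eval ![x, 1 - x] f = 1) ∧
      f.totalDegree = 5 ∧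
      MvPolynomial.eval ![(1 : ℝ), 1] f = 5 + 4 * l := by
  intro f hf
  have hfm := hf.trans (monomial_form l)
  refine ⟨?_, ?_, ?_, ?_⟩
  · intro m
    rw [hfm]
    simp only [coeff_add, coeff_monomial]
    split_ifs <;> linarith
  · intro x
    rw [hf]
    simp [Matrix.cons_val_zero, Matrix.cons_val_one, Matrix.head_cons]
    ring
  · have hm : f.coeff (Finsupp.single 0 4 + Finsupp.single 1 1) = l := by
      have n1 : (Finsupp.single 0 3 : Fin 2 →₀ ℕ)
          ≠ Finsupp.single 0 4 + Finsupp.single 1 1 := fun h => by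
        simpa using Finsupp.ext_iff.mp h 1
      have n2 : (Finsupp.single 1 3 : Fin 2 →₀ ℕ)
          ≠ Finsupp.single 0 4 + Finsupp.single 1 1 := fun h => by
        simpa using Finsupp.ext_iff.mp h 0
      have n3 : (Finsupp.single 0 1 + Finsupp.single 1 1 : Fin 2 →₀ ℕ)
          ≠ Finsupp.single 0 4 + Finsupp.single 1 1 := fun h => by
        simpa using Finsupp.ext_iff.mp h 0
      have n4 : (Finsupp.single 0 2 + Finsupp.single 1 2 : Fin 2 →₀ ℕ)
          ≠ Finsupp.single 0 4 + Finsupp.single 1 1 := fun h => by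
        simpa using Finsupp.ext_iff.mp h 0
      have n5 : (Finsupp.single 0 1 + Finsupp.single 1 4 : Fin 2 →₀ ℕ)
          ≠ Finsupp.single 0 4 + Finsupp.single 1 1 := fun h => by
        simpa using Finsupp.ext_iff.mp h 0
      rw [hfm]
      simp [coeff_add, coeff_monomial, n1, n2, n3, n4, n5]
    refine le_antisymm ?_ ?_
    · rw [hfm]
      refine le_trans (totalDegree_add _ _) (max_le (le_trans (totalDegree_add _ _) (max_le
        (le_trans (totalDegree_add _ _) (max_le (le_trans (totalDegree_add _ _) (max_le
        (le_trans (totalDegree_add _ _) (max_le ?_ ?_)) ?_)) ?_)) ?_)) ?_) <;>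
      refine le_trans (totalDegree_monomial_le _ _) ?_ <;>
      simp [Finsupp.sum_add_index, Finsupp.sum_single_index]
    · have hmem : (Finsupp.single 0 4 + Finsupp.single 1 1) ∈ f.support := by
        rw [mem_support_iff, hm]; exact ne_of_gt hl0
      have := le_totalDegree hmem
      simpa [Finsupp.sum_add_index, Finsupp.sum_single_index] using this
  · rw [hf]
    simp [Matrix.cons_val_zero, Matrix.cons_val_one, Matrix.head_cons]
    ring
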